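/- If A is an inert subring of an integral domain B and S is a multiplicatively closed subset of A not containing 0, then S⁻¹A is an inert subring of S⁻¹B. -/

import Mathlib

/-- A derivation is *locally nilpotent* if every element is killed by some iterate. -/
def IsLND {k B : Type*} [CommRing k] [CommRing B] [Algebra k B]
    (D : Derivation k B B) : Prop :=
  ∀ b : B, ∃ n : ℕ, (D.toLinearMap ^ n) b = 0

/-- A derivation *has a slice* if `1` is in its image. -/
def HasSlice {k B : Type*} [CommRing k] [CommRing B] [Algebra k B]
    (D : Derivation k B B) : Prop :=
  ∃ s : B, D s = 1

/-- The kernel of a derivation, as a subalgebra. -/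
def lndKer {k B : Type*} [CommRing k] [CommRing B] [Algebra k B]
    (D : Derivation k B B) : Subalgebra k B where
  carrier := {b | D b = 0}
  mul_mem' := by
    intro a b ha hb
    simp only [Set.mem_setOf_eq] at *
    simp [D.leibniz, ha, hb]
  add_mem' := by
    intro a b ha hb
    simp only [Set.mem_setOf_eq] at *
    simp [ha, hb]
  algebraMap_mem' := fun r => D.map_algebraMap r

/-- The Makar-Limanov invariant: intersection of the kernels of all locally
nilpotent derivations. -/
def ML (k : Type*) {B : Type*} [CommRing k] [CommRing B] [Algebra k B] : Subalgebra k B :=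
  ⨅ D ∈ {D : Derivation k B B | IsLND D}, lndKer D

/-- The Makar-Limanov–Freudenburg invariant: intersection of the kernels of all locally
nilpotent derivations admitting a slice (equal to `⊤ = B` if none exist). -/
def MLstar (k : Type*) {B : Type*} [CommRing k] [CommRing B] [Algebra k B] : Subalgebra k B :=
  ⨅ D ∈ {D : Derivation k B B | IsLND D ∧ HasSlice D}, lndKer D

/-- A `k`-algebra is *rigid* if it admits no nonzero locally nilpotent derivation. -/
def IsRigid (k B : Type*) [CommRing k] [CommRing B] [Algebra k B] : Prop :=
  ∀ D : Derivation k B B, IsLND D → D = 0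

/-- The extension `A ⊆ B` has transcendence degree `n`. -/
def TrdegEq (A B : Type*) [CommRing A] [CommRing B] [Algebra A B] (n : ℕ) : Prop :=
  (∃ x : Fin n → B, AlgebraicIndependent A x) ∧
    ∀ x : Fin (n + 1) → B, ¬ AlgebraicIndependent A x

/-- A subring `A` of a domain `B` is *inert* if `f * g ∈ A` for nonzero `f, g`
implies `f ∈ A` and `g ∈ A`. -/
def IsInert {B : Type*} [CommRing B] (A : Subring B) : Prop :=
  ∀ f g : B, f ≠ 0 → g ≠ 0 → f * g ∈ A → f ∈ A ∧ g ∈ A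

/-- If `A` is inert in the domain `B` and `S` is a multiplicative set of `A` not containing `0`,
then `S⁻¹A` is inert in `S⁻¹B`. -/
theorem stmt_4 {B : Type*} [CommRing B] [IsDomain B] (A : Subring B) (hA : IsInert A)
    (S : Submonoid A) (hS : (0 : A) ∉ S) :
    IsInert (RingHom.range
      (IsLocalization.map (Localization (S.map A.subtype)) (A.subtype : A →+* B)
        (Submonoid.le_comap_map S) : Localization S →+* Localization (S.map A.subtype))) := by
  intro f g hf hg hfg
  have hT0 : ∀ t : S.map A.subtype, (t : B) ≠ 0 := by
    rintro ⟨t, s, hs, rfl⟩ h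
    exact hS (by simpa using (Subtype.ext (by simpa using h) : s = 0) ▸ hs)
  obtain ⟨⟨b₁, t₁⟩, hf'⟩ := IsLocalization.mk'_surjective (S.map A.subtype) f
  obtain ⟨⟨b₂, t₂⟩, hg'⟩ := IsLocalization.mk'_surjective (S.map A.subtype) g
  dsimp only at hf' hg'
  subst hf' hg'
  have hb₁ : b₁ ≠ 0 := fun h => hf (by
    rw [h]; exact (IsLocalization.mk'_eq_zero_iff _ _).2 ⟨1, by simp⟩)
  have hb₂ : b₂ ≠ 0 := fun h => hg (by
    rw [h]; exact (IsLocalization.mk'_eq_zero_iff _ _).2 ⟨1, by simp⟩)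
  obtain ⟨y, hy⟩ := hfg
  obtain ⟨⟨a, s⟩, rfl⟩ := IsLocalization.mk'_surjective S y
  dsimp only at hy
  rw [IsLocalization.map_mk', ← IsLocalization.mk'_mul,
    IsLocalization.mk'_eq_iff_eq] at hy
  obtain ⟨c, hc⟩ := (IsLocalization.eq_iff_exists (S.map A.subtype) _).1 hy
  have key : ((t₁ : B) * (t₂ : B)) * (A.subtype a) = (A.subtype s : B) * (b₁ * b₂) := by
    have := mul_left_cancel₀ (hT0 c) hc
    simpa using this
  -- now inertness in B
  have hsB : (A.subtype s : B) ≠ 0 := hT0 ⟨A.subtype s, s, s.2, rfl⟩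
  have hmem : ((A.subtype s : B) * b₁) * b₂ ∈ A := by
    have : ((A.subtype s : B) * b₁) * b₂ = (t₁ : B) * (t₂ : B) * (A.subtype a) := by
      rw [key]; ring
    rw [this]
    obtain ⟨u₁, _, hu₁⟩ := t₁.2
    obtain ⟨u₂, _, hu₂⟩ := t₂.2
    rw [← hu₁, ← hu₂]
    exact A.mul_mem (A.mul_mem u₁.2 u₂.2) a.2
  obtain ⟨h1, h2⟩ := hA _ _ (mul_ne_zero hsB hb₁) hb₂ hmem
  constructor
  · -- f = mk' b₁ t₁ = mk' (s*b₁) (s*t₁)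
    obtain ⟨s₁, hs₁S, hs₁⟩ := t₁.2
    refine ⟨IsLocalization.mk' (Localization S) (⟨(A.subtype s : B) * b₁, h1⟩ : A)
      (s * (⟨s₁, hs₁S⟩ : S)), ?_⟩
    rw [IsLocalization.map_mk']
    rw [IsLocalization.mk'_eq_iff_eq]
    congr 1
    show (t₁ : B) * ((A.subtype s : B) * b₁) = (A.subtype (s * s₁) : B) * b₁
    rw [map_mul, hs₁]
    ring
  · obtain ⟨s₂, hs₂S, hs₂⟩ := t₂.2
    refine ⟨IsLocalization.mk' (Localization S) (⟨b₂, h2⟩ : A) ((⟨s₂, hs₂S⟩ : S)), ?_⟩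
    rw [IsLocalization.map_mk']
    rw [IsLocalization.mk'_eq_iff_eq]
    congr 1
    show (t₂ : B) * b₂ = (A.subtype s₂ : B) * b₂
    rw [hs₂]
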